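/- Let a < b be real numbers and n ≥ 1. Then for every monic real polynomial P of degree n, sup_{x ∈ [a,b]} |P(x)| ≥ 2·((b−a)/4)^n, and this bound is attained by the monic polynomial 2·((b−a)/4)^n · T_n((2X − a − b)/(b − a)), where T_n is the n-th classical Chebyshev polynomial. -/

import Mathlib

open Polynomial

/-- The sup norm of a real polynomial on a set `K ⊆ ℝ`. -/
noncomputable def supNormOn (K : Set ℝ) (P : Polynomial ℝ) : ℝ :=
  sSup ((fun x => |P.eval x|) '' K)

lemma T_deg_aux : ∀ n : ℕ, (Chebyshev.T ℝ n).natDegree ≤ n ∧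
    (Chebyshev.T ℝ n).coeff n = (if n = 0 then 1 else 2^(n-1))
  | 0 => by simp [Chebyshev.T_zero]
  | 1 => by simp [Chebyshev.T_one]
  | (n+2) => by
    obtain ⟨h1d, h1c⟩ := T_deg_aux (n+1)
    obtain ⟨h0d, h0c⟩ := T_deg_aux n
    have hT : Chebyshev.T ℝ (n+2 : ℕ) = 2 * X * Chebyshev.T ℝ (n+1 : ℕ) - Chebyshev.T ℝ (n : ℕ) := by
      push_cast
      exact Chebyshev.T_add_two ℝ n
    constructor
    · rw [hT]
      refine le_trans (natDegree_sub_le _ _) (max_le ?_ (le_trans h0d (by omega)))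
      refine le_trans (natDegree_mul_le) ?_
      have : ((2 : ℝ[X]) * X).natDegree ≤ 1 := by
        refine le_trans natDegree_mul_le ?_
        simp
      omega
    · have h2X : (2 : ℝ[X]) * X = C 2 * X := by rw [map_ofNat]
      rw [hT, coeff_sub, h2X, mul_assoc, coeff_C_mul, coeff_X_mul, h1c]
      have : (Chebyshev.T ℝ (n:ℤ)).coeff (n+2) = 0 :=
        coeff_eq_zero_of_natDegree_lt (by omega)
      rw [this]
      simp
      ring

lemma T_natDegree' (n : ℕ) (hn : 1 ≤ n) : (Chebyshev.T ℝ n).natDegree = n := by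
  obtain ⟨hd, hc⟩ := T_deg_aux n
  refine le_antisymm hd (le_natDegree_of_ne_zero ?_)
  rw [hc, if_neg (by omega)]
  positivity

lemma T_leadingCoeff' (n : ℕ) (hn : 1 ≤ n) : (Chebyshev.T ℝ n).leadingCoeff = 2^(n-1) := by
  obtain ⟨hd, hc⟩ := T_deg_aux n
  rw [leadingCoeff, T_natDegree' n hn, hc, if_neg (by omega)]

lemma T_eval_cos' (n : ℕ) (θ : ℝ) :
    (Chebyshev.T ℝ n).eval (Real.cos θ) = Real.cos (n * θ) := by
  have := Chebyshev.T_real_cos θ (n : ℤ)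
  push_cast at this ⊢
  exact this

lemma abs_T_eval_le (n : ℕ) (t : ℝ) (h1 : -1 ≤ t) (h2 : t ≤ 1) :
    |(Chebyshev.T ℝ n).eval t| ≤ 1 := by
  rw [← Real.cos_arccos h1 h2, T_eval_cos']
  exact Real.abs_cos_le_one _

lemma L_natDegree (a b : ℝ) (hab : a < b) :
    (C (2 / (b - a)) * X - C ((a + b) / (b - a))).natDegree = 1 := by
  have hba : b - a ≠ 0 := by intro h; linarith [h]
  rw [sub_eq_add_neg, ← map_neg]
  compute_degree!

lemma L_leadingCoeff (a b : ℝ) (hab : a < b) :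
    (C (2 / (b - a)) * X - C ((a + b) / (b - a))).leadingCoeff = 2 / (b - a) := by
  rw [leadingCoeff, L_natDegree a b hab]
  simp [coeff_sub]

lemma cheb_monic (a b : ℝ) (hab : a < b) (n : ℕ) (hn : 1 ≤ n) :
    (C (2 * ((b - a) / 4) ^ n) *
        (Polynomial.Chebyshev.T ℝ n).comp (C (2 / (b - a)) * X - C ((a + b) / (b - a)))).Monic := by
  have hba : b - a ≠ 0 := by intro h; linarith [h]
  unfold Monic
  rw [leadingCoeff_mul, leadingCoeff_C,
    leadingCoeff_comp (by rw [L_natDegree a b hab]; norm_num), L_leadingCoeff a b hab,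
    T_leadingCoeff' n hn, T_natDegree' n hn]
  have h4 : (4:ℝ)^n = 2^n * 2^n := by rw [← mul_pow]; norm_num
  have h2 : (2:ℝ)^(n-1) * 2 = 2^n := by
    rw [← pow_succ]; congr 1; omega
  rw [div_pow, div_pow, h4, ← h2]
  field_simp

theorem chebyshev_minimal_on_Icc_general (a b : ℝ) (hab : a < b) (n : ℕ) (hn : 1 ≤ n) :
    (∀ P : Polynomial ℝ, P.Monic → P.natDegree = n →
        2 * ((b - a) / 4) ^ n ≤ supNormOn (Set.Icc a b) P) ∧
    supNormOn (Set.Icc a b)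
        (C (2 * ((b - a) / 4) ^ n) *
          (Polynomial.Chebyshev.T ℝ n).comp (C (2 / (b - a)) * X - C ((a + b) / (b - a))))
      = 2 * ((b - a) / 4) ^ n ∧
    (C (2 * ((b - a) / 4) ^ n) *
        (Polynomial.Chebyshev.T ℝ n).comp (C (2 / (b - a)) * X - C ((a + b) / (b - a)))).Monic := by
  have hba : (0:ℝ) < b - a := by linarith
  have hba' : b - a ≠ 0 := ne_of_gt hba
  have hnR : (n:ℝ) ≠ 0 := by positivity
  set M : ℝ := 2 * ((b - a) / 4) ^ n with hMdef
  have hM : 0 < M := by positivity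
  set L : ℝ[X] := C (2 / (b - a)) * X - C ((a + b) / (b - a)) with hLdef
  set Pc : ℝ[X] := C M * (Chebyshev.T ℝ n).comp L with hPcdef
  have hmonic : Pc.Monic := cheb_monic a b hab n hn
  have hPcdeg : Pc.natDegree = n := by
    rw [hPcdef, natDegree_C_mul (ne_of_gt hM), natDegree_comp, L_natDegree a b hab,
      T_natDegree' n hn, mul_one]
  have hPceval : ∀ x : ℝ, Pc.eval x = M * (Chebyshev.T ℝ n).eval ((2*x - (a+b))/(b-a)) := by
    intro x
    rw [hPcdef, eval_mul, eval_C, eval_comp, hLdef]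
    congr 2
    simp
    ring
  -- part 2
  have hub : ∀ v ∈ (fun x => |Pc.eval x|) '' Set.Icc a b, v ≤ M := by
    rintro v ⟨x, hx, rfl⟩
    simp only
    rw [hPceval, abs_mul, abs_of_pos hM]
    have ht1 : -1 ≤ (2*x - (a+b))/(b-a) := by
      rw [le_div_iff₀ hba]
      obtain ⟨h1, h2⟩ := hx
      linarith
    have ht2 : (2*x - (a+b))/(b-a) ≤ 1 := by
      rw [div_le_one hba]
      obtain ⟨h1, h2⟩ := hx
      linarith
    have := abs_T_eval_le n _ ht1 ht2
    nlinarith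
  have hmem : M ∈ (fun x => |Pc.eval x|) '' Set.Icc a b := by
    refine ⟨b, ⟨le_of_lt hab, le_refl b⟩, ?_⟩
    simp only
    have h1 : (2*b - (a+b))/(b-a) = 1 := by
      rw [div_eq_one_iff_eq hba']
      ring
    rw [hPceval, h1]
    have : (Chebyshev.T ℝ n).eval 1 = 1 := by
      rw [← Real.cos_zero, T_eval_cos', mul_zero, Real.cos_zero]
    rw [this, mul_one, abs_of_pos hM]
  have part2 : supNormOn (Set.Icc a b) Pc = M := IsGreatest.csSup_eq ⟨hmem, hub⟩
  refine ⟨?_, part2, hmonic⟩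
  -- part 1
  intro P hPm hPd
  by_contra hlt
  push_neg at hlt
  have hcont : Continuous fun x : ℝ => |P.eval x| := (Polynomial.continuous P).abs
  have hbdd : BddAbove ((fun x => |P.eval x|) '' Set.Icc a b) :=
    (isCompact_Icc.image hcont).bddAbove
  have hPx : ∀ x ∈ Set.Icc a b, |P.eval x| < M := fun x hx =>
    lt_of_le_of_lt (le_csSup hbdd ⟨x, hx, rfl⟩) hlt
  -- extremal points
  set y : ℕ → ℝ := fun k => ((a+b) + (b-a) * Real.cos (k * Real.pi / n))/2 with hydef
  have hymem : ∀ k : ℕ, y k ∈ Set.Icc a b := by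
    intro k
    have h1 := Real.neg_one_le_cos (k * Real.pi / n)
    have h2 := Real.cos_le_one (k * Real.pi / n)
    constructor <;> · simp only [hydef]; nlinarith
  have hyarg : ∀ k : ℕ, (2 * y k - (a+b))/(b-a) = Real.cos (k * Real.pi / n) := by
    intro k
    rw [hydef]
    field_simp
    ring
  have hyval : ∀ k : ℕ, k ≤ n → Pc.eval (y k) = M * (-1)^k := by
    intro k hk
    rw [hPceval, hyarg, T_eval_cos']
    have harg : (n:ℝ) * (k * Real.pi / n) = k * Real.pi := by
      field_simp
    rw [harg]
    congr 1
    simpa using Real.cos_add_nat_mul_pi 0 k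
  set Q : ℝ[X] := Pc - P with hQdef
  have hsign : ∀ k : ℕ, k ≤ n → 0 < (-1:ℝ)^k * Q.eval (y k) := by
    intro k hk
    rw [hQdef, eval_sub, hyval k hk]
    have h := abs_lt.mp (hPx (y k) (hymem k))
    rcases Nat.even_or_odd k with he | ho
    · rw [he.neg_one_pow]
      nlinarith [h.1, h.2]
    · rw [ho.neg_one_pow]
      nlinarith [h.1, h.2]
  have hQne : Q ≠ 0 := by
    intro h
    have := hsign 0 (by omega)
    rw [h] at this
    simp at this
  have hQdeg : Q.natDegree < n := by
    have hdPc : Pc.degree = (n : ℕ) := by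
      rw [degree_eq_natDegree hmonic.ne_zero, hPcdeg]
    have hdP : P.degree = (n : ℕ) := by
      rw [degree_eq_natDegree hPm.ne_zero, hPd]
    have := degree_sub_lt (hdPc.trans hdP.symm) hmonic.ne_zero
      (by rw [hmonic.leadingCoeff, hPm.leadingCoeff])
    rw [hdPc] at this
    exact (natDegree_lt_iff_degree_lt hQne).mpr this
  -- y is strictly decreasing on [0, n]
  have hymono : ∀ j k : ℕ, j < k → k ≤ n → y k < y j := by
    intro j k hjk hkn
    have hπ := Real.pi_pos
    have hn0 : (0:ℝ) < n := by positivity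
    have hjmem : (j * Real.pi / n) ∈ Set.Icc 0 Real.pi := by
      constructor
      · positivity
      · rw [div_le_iff₀ hn0]
        have : (j:ℝ) ≤ n := by
          have : (j:ℝ) < n := by exact_mod_cast lt_of_lt_of_le hjk hkn
          linarith
        nlinarith
    have hkmem : (k * Real.pi / n) ∈ Set.Icc 0 Real.pi := by
      constructor
      · positivity
      · rw [div_le_iff₀ hn0]
        have : (k:ℝ) ≤ n := by exact_mod_cast hkn
        nlinarith
    have hjk' : (j:ℝ) < k := by exact_mod_cast hjk
    have hlt' : (j * Real.pi / n) < (k * Real.pi / n) := by gcongr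
    have := Real.strictAntiOn_cos hjmem hkmem hlt'
    simp only [hydef]
    nlinarith
  -- roots from sign changes
  have hroot : ∀ k : ℕ, ∃ z : ℝ, k < n → z ∈ Set.Ioo (y (k+1)) (y k) ∧ Q.eval z = 0 := by
    intro k
    by_cases hk : k < n
    swap
    · exact ⟨0, fun h => absurd h hk⟩
    have h1 := hsign k (le_of_lt hk)
    have h2 := hsign (k+1) hk
    have hle : y (k+1) ≤ y k := (hymono k (k+1) (by omega) hk).le
    have hcQ : ContinuousOn (fun x : ℝ => Q.eval x) (Set.Icc (y (k+1)) (y k)) :=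
      (Polynomial.continuous Q).continuousOn
    rcases Nat.even_or_odd k with he | ho
    · have hk1 : Odd (k+1) := Even.add_one he
      rw [he.neg_one_pow, one_mul] at h1
      rw [hk1.neg_one_pow, neg_one_mul, neg_pos] at h2
      obtain ⟨z, hz, hz0⟩ := intermediate_value_Ioo hle hcQ (Set.mem_Ioo.mpr ⟨h2, h1⟩)
      exact ⟨z, fun _ => ⟨hz, hz0⟩⟩
    · have hk1 : Even (k+1) := Odd.add_one ho
      rw [ho.neg_one_pow, neg_one_mul, neg_pos] at h1
      rw [hk1.neg_one_pow, one_mul] at h2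
      obtain ⟨z, hz, hz0⟩ := intermediate_value_Ioo' hle hcQ (Set.mem_Ioo.mpr ⟨h1, h2⟩)
      exact ⟨z, fun _ => ⟨hz, hz0⟩⟩
  choose z hz using hroot
  -- z is injective on range n
  have hzmono : ∀ j k : ℕ, j < k → k < n → z k < z j := by
    intro j k hjk hkn
    have hzk := hz k hkn
    have hzj := hz j (lt_trans hjk hkn)
    have hyk : y k ≤ y (j+1) := by
      rcases eq_or_lt_of_le (show j+1 ≤ k by omega) with h | h
      · rw [← h]
      · exact (hymono (j+1) k h (le_of_lt hkn)).le
    calc z k < y k := hzk.1.2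
      _ ≤ y (j+1) := hyk
      _ < z j := hzj.1.1
  have hinj : Set.InjOn z (Finset.range n : Set ℕ) := by
    intro i hi j hj hij
    by_contra hne
    rcases Nat.lt_or_ge i j with h | h
    · have := hzmono i j h (by simpa using hj)
      rw [hij] at this
      exact absurd this (lt_irrefl _)
    · have hij' : j < i := by omega
      have := hzmono j i hij' (by simpa using hi)
      rw [hij] at this
      exact absurd this (lt_irrefl _)
  have hcard : ((Finset.range n).image z).card = n := by
    rw [Finset.card_image_of_injOn (by simpa using hinj), Finset.card_range]
  have hsub : (Finset.range n).image z ⊆ Q.roots.toFinset := by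
    intro w hw
    simp only [Finset.mem_image, Finset.mem_range] at hw
    obtain ⟨k, hk, rfl⟩ := hw
    rw [Multiset.mem_toFinset, mem_roots hQne]
    exact (hz k hk).2
  have : n ≤ Q.natDegree := by
    calc n = ((Finset.range n).image z).card := hcard.symm
      _ ≤ Q.roots.toFinset.card := Finset.card_le_card hsub
      _ ≤ Multiset.card Q.roots := Multiset.toFinset_card_le _
      _ ≤ Q.natDegree := Polynomial.card_roots' Q
  omega
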